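/- Let X be a real square matrix and ω a real number. Then μ_∞[X] ≤ ω if and only if ‖e^{tX}‖_∞ ≤ e^{tω} for all t ≥ 0. -/

import Mathlib

/-- The maximum norm of a real matrix: `‖X‖_∞ = max_i Σ_j |X i j|`
(the operator norm induced by the maximum norm on vectors). -/
noncomputable def matMaxNorm {ι κ : Type*} [Fintype ι] [Fintype κ]
    (X : Matrix ι κ ℝ) : ℝ :=
  ⨆ i, ∑ j, |X i j|

/-- The logarithmic maximum norm `μ_∞[X] = max_i ( x_{ii} + Σ_{j≠i} |x_{ij}| )`. -/
noncomputable def logMaxNorm {ι : Type*} [Fintype ι] [DecidableEq ι]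
    (X : Matrix ι ι ℝ) : ℝ :=
  ⨆ i, (X i i + ∑ j ∈ Finset.univ.erase i, |X i j|)

open NormedSpace
open scoped Nat Topology
set_option maxHeartbeats 1000000

lemma exp_remainder_bound {𝔸 : Type*} [NormedRing 𝔸] [NormedAlgebra ℝ 𝔸] [CompleteSpace 𝔸]
    (x : 𝔸) : ‖exp x - 1 - x‖ ≤ ‖x‖ ^ 2 * Real.exp ‖x‖ := by
  have hs : Summable fun k : ℕ => (k ! : ℝ)⁻¹ • x ^ k := expSeries_summable' x
  have hs1 : Summable fun k : ℕ => ((k+1)! : ℝ)⁻¹ • x ^ (k+1) :=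
    ((summable_nat_add_iff 1).2 hs)
  have hsn : Summable fun k : ℕ => ‖((k+2)! : ℝ)⁻¹ • x ^ (k+2)‖ :=
    ((summable_nat_add_iff 2).2 (norm_expSeries_summable' x))
  have hrw : exp x - 1 - x = ∑' k : ℕ, ((k+2)! : ℝ)⁻¹ • x ^ (k+2) := by
    rw [exp_eq_tsum ℝ]
    show (∑' n : ℕ, (n ! : ℝ)⁻¹ • x ^ n) - 1 - x = _
    rw [Summable.tsum_eq_zero_add hs, Summable.tsum_eq_zero_add hs1]
    simp [Nat.factorial]
  rw [hrw]
  have hb : ∀ k : ℕ, ‖((k+2)! : ℝ)⁻¹ • x ^ (k+2)‖ ≤ ‖x‖^2 * ((k ! : ℝ)⁻¹ * ‖x‖ ^ k) := by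
    intro k
    rw [norm_smul, Real.norm_eq_abs, abs_of_nonneg (by positivity)]
    calc ((k+2)! : ℝ)⁻¹ * ‖x ^ (k+2)‖ ≤ (k ! : ℝ)⁻¹ * ‖x‖ ^ (k+2) := by
          apply mul_le_mul
          · apply inv_anti₀ (by positivity)
            exact_mod_cast Nat.factorial_le (by omega)
          · exact norm_pow_le' x (by omega)
          · positivity
          · positivity
      _ = ‖x‖^2 * ((k ! : ℝ)⁻¹ * ‖x‖ ^ k) := by ring
  have hsb : Summable fun k : ℕ => ‖x‖^2 * ((k ! : ℝ)⁻¹ * ‖x‖ ^ k) := by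
    apply Summable.mul_left
    simpa [div_eq_inv_mul] using Real.summable_pow_div_factorial ‖x‖
  calc ‖∑' k : ℕ, ((k+2)! : ℝ)⁻¹ • x ^ (k+2)‖
      ≤ ∑' k : ℕ, ‖((k+2)! : ℝ)⁻¹ • x ^ (k+2)‖ := norm_tsum_le_tsum_norm hsn
    _ ≤ ∑' k : ℕ, ‖x‖^2 * ((k ! : ℝ)⁻¹ * ‖x‖ ^ k) := Summable.tsum_le_tsum hb hsn hsb
    _ = ‖x‖^2 * ∑' k : ℕ, ((k ! : ℝ)⁻¹ * ‖x‖ ^ k) := tsum_mul_left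
    _ = ‖x‖^2 * Real.exp ‖x‖ := by
        rw [Real.exp_eq_exp_ℝ, exp_eq_tsum ℝ]
        simp [smul_eq_mul]

section helpers
attribute [local instance] Matrix.linftyOpSemiNormedRing Matrix.linftyOpNormedRing
  Matrix.linftyOpNormedAlgebra

variable {n : ℕ}

lemma rowSum_le_norm (A : Matrix (Fin n) (Fin n) ℝ) (i : Fin n) :
    ∑ j, |A i j| ≤ ‖A‖ := by
  rw [Matrix.linfty_opNorm_def]
  have h1 : (∑ j, |A i j|) = ((∑ j, ‖A i j‖₊ : NNReal) : ℝ) := by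
    push_cast
    simp [Real.norm_eq_abs]
  rw [h1]
  exact NNReal.coe_le_coe.2 (Finset.le_sup (f := fun i => ∑ j, ‖A i j‖₊) (Finset.mem_univ i))

lemma norm_le_of_rowSums {A : Matrix (Fin n) (Fin n) ℝ} {c : ℝ} (hc : 0 ≤ c)
    (h : ∀ i, ∑ j, |A i j| ≤ c) : ‖A‖ ≤ c := by
  rw [Matrix.linfty_opNorm_def]
  have hle : (Finset.univ.sup fun i => ∑ j, ‖A i j‖₊) ≤ (⟨c, hc⟩ : NNReal) := by
    apply Finset.sup_le
    intro i _
    apply NNReal.coe_le_coe.1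
    push_cast
    exact (h i : _ ≤ ((⟨c, hc⟩ : NNReal) : ℝ))
  exact_mod_cast hle

lemma entry_abs_le_norm (A : Matrix (Fin n) (Fin n) ℝ) (i j : Fin n) :
    |A i j| ≤ ‖A‖ :=
  le_trans (Finset.single_le_sum (f := fun j => |A i j|) (fun _ _ => abs_nonneg _)
    (Finset.mem_univ j)) (rowSum_le_norm A i)

lemma matMaxNorm_eq_norm (hn : 0 < n) (A : Matrix (Fin n) (Fin n) ℝ) :
    matMaxNorm A = ‖A‖ := by
  have : Nonempty (Fin n) := ⟨⟨0, hn⟩⟩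
  apply le_antisymm
  · exact ciSup_le fun i => rowSum_le_norm A i
  · apply norm_le_of_rowSums
    · exact le_trans (Finset.sum_nonneg fun _ _ => abs_nonneg _)
        (le_ciSup (f := fun i => ∑ j, |A i j|) (Set.Finite.bddAbove (Set.finite_range _))
          (Classical.arbitrary (Fin n)))
    · exact fun i => le_ciSup (f := fun i => ∑ j, |A i j|)
        (Set.Finite.bddAbove (Set.finite_range _)) i

lemma rowSum_one_add_smul (X : Matrix (Fin n) (Fin n) ℝ) {h : ℝ}
    (h0 : 0 ≤ h) (h1 : h * ‖X‖ ≤ 1) (i : Fin n) :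
    ∑ j, |((1 : Matrix (Fin n) (Fin n) ℝ) + h • X) i j|
      = 1 + h * (X i i + ∑ j ∈ Finset.univ.erase i, |X i j|) := by
  rw [← Finset.add_sum_erase _ _ (Finset.mem_univ i)]
  have hii : |((1 : Matrix (Fin n) (Fin n) ℝ) + h • X) i i| = 1 + h * X i i := by
    have hb : |h * X i i| ≤ 1 := by
      calc |h * X i i| = h * |X i i| := by rw [abs_mul, abs_of_nonneg h0]
        _ ≤ h * ‖X‖ := by
            have := entry_abs_le_norm X i i
            nlinarith [abs_nonneg (X i i)]
        _ ≤ 1 := h1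
    have hpos : (0:ℝ) ≤ 1 + h * X i i := by
      have := neg_abs_le (h * X i i); linarith
    simp [Matrix.add_apply, Matrix.one_apply_eq, Matrix.smul_apply, smul_eq_mul,
      abs_of_nonneg hpos]
  have hoff : ∀ j ∈ Finset.univ.erase i, |((1 : Matrix (Fin n) (Fin n) ℝ) + h • X) i j|
      = h * |X i j| := by
    intro j hj
    have hne : j ≠ i := Finset.ne_of_mem_erase hj
    simp [Matrix.add_apply, Matrix.one_apply_ne (Ne.symm hne), Matrix.smul_apply, smul_eq_mul,
      abs_mul, abs_of_nonneg h0]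
  rw [hii, Finset.sum_congr rfl hoff, ← Finset.mul_sum]
  ring

lemma norm_exp_le_aux (hn : 0 < n) (X : Matrix (Fin n) (Fin n) ℝ) {h : ℝ}
    (h0 : 0 ≤ h) (h1 : h * ‖X‖ ≤ 1) :
    ‖exp (h • X)‖ ≤ 1 + h * logMaxNorm X + h^2 * (‖X‖^2 * Real.exp 1) := by
  have : Nonempty (Fin n) := ⟨⟨0, hn⟩⟩
  have hnorm : ‖h • X‖ = h * ‖X‖ := by rw [norm_smul, Real.norm_eq_abs, abs_of_nonneg h0]
  have hsplit : exp (h • X)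
      = ((1 : Matrix (Fin n) (Fin n) ℝ) + h • X) + (exp (h • X) - 1 - h • X) := by abel
  have hone : ‖(1 : Matrix (Fin n) (Fin n) ℝ) + h • X‖ ≤ 1 + h * logMaxNorm X := by
    have hμ : ∀ i, (X i i + ∑ j ∈ Finset.univ.erase i, |X i j|) ≤ logMaxNorm X := fun i =>
      le_ciSup (f := fun i => X i i + ∑ j ∈ Finset.univ.erase i, |X i j|)
        (Set.Finite.bddAbove (Set.finite_range _)) i
    have hc : 0 ≤ 1 + h * logMaxNorm X := by
      have i0 := Classical.arbitrary (Fin n)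
      have h2 := rowSum_one_add_smul X h0 h1 i0
      have h3 : 0 ≤ ∑ j, |((1 : Matrix (Fin n) (Fin n) ℝ) + h • X) i0 j| :=
        Finset.sum_nonneg fun _ _ => abs_nonneg _
      nlinarith [hμ i0]
    apply norm_le_of_rowSums hc
    intro i
    rw [rowSum_one_add_smul X h0 h1 i]
    nlinarith [hμ i]
  have hrem : ‖exp (h • X) - 1 - h • X‖ ≤ h^2 * (‖X‖^2 * Real.exp 1) := by
    refine le_trans (exp_remainder_bound _) ?_
    rw [hnorm]
    have he : Real.exp (h * ‖X‖) ≤ Real.exp 1 := Real.exp_le_exp.2 h1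
    have h2 : (0:ℝ) ≤ (h*‖X‖)^2 := sq_nonneg _
    calc (h*‖X‖)^2 * Real.exp (h*‖X‖) ≤ (h*‖X‖)^2 * Real.exp 1 := by nlinarith [Real.exp_pos (h*‖X‖)]
      _ = h^2 * (‖X‖^2 * Real.exp 1) := by ring
  calc ‖exp (h • X)‖
      ≤ ‖(1 : Matrix (Fin n) (Fin n) ℝ) + h • X‖ + ‖exp (h • X) - 1 - h • X‖ := by
        nth_rewrite 1 [hsplit]; exact norm_add_le _ _
    _ ≤ 1 + h * logMaxNorm X + h^2 * (‖X‖^2 * Real.exp 1) := add_le_add hone hrem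

lemma statement0_aux (hn : 0 < n) (X : Matrix (Fin n) (Fin n) ℝ) (ω : ℝ) :
    logMaxNorm X ≤ ω ↔
      ∀ t : ℝ, 0 ≤ t → matMaxNorm (exp (t • X)) ≤ Real.exp (t * ω) := by
  have : Nonempty (Fin n) := ⟨⟨0, hn⟩⟩
  constructor
  · intro hμ t ht
    rw [matMaxNorm_eq_norm hn]
    set C := ‖X‖^2 * Real.exp 1 with hC
    have hC0 : 0 ≤ C := by positivity
    have key : ∀ m : ℕ, 1 ≤ m → t * ‖X‖ ≤ m →
        ‖exp (t • X)‖ ≤ Real.exp (t * ω + t^2 * C / m) := by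
      intro m hm1 hmX
      have hm0 : (0:ℝ) < m := by exact_mod_cast hm1
      have hdiv0 : 0 ≤ t / m := div_nonneg ht hm0.le
      have hdiv1 : (t / m) * ‖X‖ ≤ 1 := by
        rw [div_mul_eq_mul_div, div_le_one hm0]; exact hmX
      have hsm : (m : ℕ) • ((t/m) • X) = t • X := by
        rw [← Nat.cast_smul_eq_nsmul ℝ, smul_smul]
        congr 1
        field_simp
      have hexp : exp (t • X) = exp ((t/m) • X) ^ m := by
        rw [← hsm, Matrix.exp_nsmul]
      have hbase := norm_exp_le_aux hn X hdiv0 hdiv1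
      calc ‖exp (t • X)‖ = ‖exp ((t/m) • X) ^ m‖ := by rw [hexp]
        _ ≤ ‖exp ((t/m) • X)‖ ^ m := norm_pow_le' _ hm1
        _ ≤ (1 + (t/m) * logMaxNorm X + (t/m)^2 * C) ^ m :=
            pow_le_pow_left₀ (norm_nonneg _) hbase m
        _ ≤ Real.exp ((t/m) * ω + (t/m)^2 * C) ^ m := by
            apply pow_le_pow_left₀ (le_trans (norm_nonneg _) hbase)
            have h1' : (t/m) * logMaxNorm X ≤ (t/m) * ω := by nlinarith
            nlinarith [Real.add_one_le_exp ((t/m) * ω + (t/m)^2 * C)]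
        _ = Real.exp (t * ω + t^2 * C / m) := by
            rw [← Real.exp_nat_mul]
            congr 1
            field_simp
    have hlim : Filter.Tendsto (fun m : ℕ => Real.exp (t * ω + t^2 * C / m))
        Filter.atTop (𝓝 (Real.exp (t * ω))) := by
      have h1 : Filter.Tendsto (fun m : ℕ => t^2 * C / (m:ℝ)) Filter.atTop (𝓝 0) :=
        tendsto_const_div_atTop_nhds_zero_nat _
      have h2 : Filter.Tendsto (fun m : ℕ => t * ω + t^2 * C / (m:ℝ)) Filter.atTop
          (𝓝 (t * ω)) := by
        simpa using (tendsto_const_nhds (x := t * ω) (f := Filter.atTop)).add h1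
      exact (Real.continuous_exp.continuousAt.tendsto).comp h2
    apply ge_of_tendsto hlim
    filter_upwards [Filter.eventually_ge_atTop (max 1 ⌈t * ‖X‖⌉₊)] with m hm
    apply key
    · exact le_trans (le_max_left _ _) hm
    · calc t * ‖X‖ ≤ (⌈t * ‖X‖⌉₊ : ℝ) := Nat.le_ceil _
        _ ≤ (m : ℝ) := by exact_mod_cast le_trans (le_max_right _ _) hm
  · intro H
    apply ciSup_le
    intro i
    set μi := X i i + ∑ j ∈ Finset.univ.erase i, |X i j| with hμi
    set C := (n : ℝ) * (‖X‖^2 * Real.exp 1) with hC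
    have hC0 : 0 ≤ C := by positivity
    have key : ∀ t : ℝ, 0 < t → t * ‖X‖ ≤ 1 →
        μi ≤ (Real.exp (t*ω) - 1)/t + C * t := by
      intro t ht ht1
      have hnorm : ‖t • X‖ = t * ‖X‖ := by
        rw [norm_smul, Real.norm_eq_abs, abs_of_nonneg ht.le]
      have hrow_le : ∑ j, |(exp (t • X)) i j| ≤ Real.exp (t*ω) :=
        le_trans (le_ciSup (f := fun i => ∑ j, |(exp (t • X)) i j|)
          (Set.Finite.bddAbove (Set.finite_range _)) i) (H t ht.le)
      have hrem : ∀ j, |(exp (t • X) - 1 - t • X) i j| ≤ t^2 * (‖X‖^2 * Real.exp 1) := by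
        intro j
        refine le_trans (entry_abs_le_norm _ i j) (le_trans (exp_remainder_bound _) ?_)
        rw [hnorm]
        have he : Real.exp (t * ‖X‖) ≤ Real.exp 1 := Real.exp_le_exp.2 ht1
        calc (t*‖X‖)^2 * Real.exp (t*‖X‖) ≤ (t*‖X‖)^2 * Real.exp 1 := by
              nlinarith [sq_nonneg (t*‖X‖), Real.exp_pos (t*‖X‖)]
          _ = t^2 * (‖X‖^2 * Real.exp 1) := by ring
      have hlower : ∀ j, |((1 : Matrix (Fin n) (Fin n) ℝ) + t • X) i j|
          - t^2 * (‖X‖^2 * Real.exp 1) ≤ |(exp (t • X)) i j| := by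
        intro j
        have hsplit : (exp (t • X)) i j
            = ((1 : Matrix (Fin n) (Fin n) ℝ) + t • X) i j + (exp (t • X) - 1 - t • X) i j := by
          simp [Matrix.add_apply, Matrix.sub_apply]
        rw [hsplit]
        have habs := abs_add_le (((1 : Matrix (Fin n) (Fin n) ℝ) + t • X) i j
            + (exp (t • X) - 1 - t • X) i j) (-(exp (t • X) - 1 - t • X) i j)
        simp only [add_neg_cancel_right, abs_neg] at habs
        have := hrem j
        linarith
      have hsum : (1 + t * μi) - n * (t^2 * (‖X‖^2 * Real.exp 1))
          ≤ ∑ j, |(exp (t • X)) i j| := by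
        have h1 := Finset.sum_le_sum (fun j (_ : j ∈ Finset.univ) => hlower j)
        rw [Finset.sum_sub_distrib, Finset.sum_const, Finset.card_univ, Fintype.card_fin,
          rowSum_one_add_smul X ht.le ht1 i] at h1
        calc (1 + t * μi) - n * (t^2 * (‖X‖^2 * Real.exp 1))
            = 1 + t * μi - n • (t^2 * (‖X‖^2 * Real.exp 1)) := by
              rw [nsmul_eq_mul]
          _ ≤ _ := h1
      have h2 : t * μi ≤ (Real.exp (t*ω) - 1) + C * t^2 := by
        rw [hC]; nlinarith
      calc μi = (t * μi)/t := by field_simp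
        _ ≤ ((Real.exp (t*ω) - 1) + C * t^2)/t := by
            gcongr
        _ = (Real.exp (t*ω) - 1)/t + C * t := by field_simp
    have hd : HasDerivAt (fun s : ℝ => Real.exp (s * ω)) ω 0 := by
      have h := (Real.hasDerivAt_exp (0*ω)).comp 0 (hasDerivAt_mul_const ω)
      simp only [zero_mul, Real.exp_zero, one_mul] at h
      exact h
    have h1 : Filter.Tendsto (fun t => (Real.exp (t*ω) - 1)/t) (nhdsWithin 0 (Set.Ioi 0))
        (𝓝 ω) := by
      have hsl := (hasDerivAt_iff_tendsto_slope.mp hd).mono_left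
        (nhdsWithin_mono 0 (fun x hx => ne_of_gt hx))
      refine hsl.congr' ?_
      filter_upwards with t
      simp [slope_def_field]
    have h2 : Filter.Tendsto (fun t : ℝ => C * t) (nhdsWithin 0 (Set.Ioi 0)) (𝓝 0) := by
      have hcont : Filter.Tendsto (fun t : ℝ => C * t) (𝓝 0) (𝓝 (C * 0)) :=
        (continuous_const.mul continuous_id).tendsto (0:ℝ)
      have := hcont.mono_left (nhdsWithin_le_nhds (s := Set.Ioi (0:ℝ)))
      simpa using this
    have hlim : Filter.Tendsto (fun t => (Real.exp (t*ω) - 1)/t + C * t)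
        (nhdsWithin 0 (Set.Ioi 0)) (𝓝 ω) := by
      simpa using h1.add h2
    apply ge_of_tendsto hlim
    have hδ : (0:ℝ) < (‖X‖+1)⁻¹ := by positivity
    filter_upwards [Ioo_mem_nhdsGT_of_mem (Set.mem_Ico.2 ⟨le_refl (0:ℝ), hδ⟩)] with t ht
    apply key t ht.1
    have h3 : t * (‖X‖+1) < 1 := by
      have hpos : (0:ℝ) < ‖X‖ + 1 := by positivity
      calc t * (‖X‖+1) < (‖X‖+1)⁻¹ * (‖X‖+1) := mul_lt_mul_of_pos_right ht.2 hpos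
        _ = 1 := inv_mul_cancel₀ hpos.ne'
    nlinarith [ht.1.le, norm_nonneg X]

end helpers


/-- Let `X` be a real square matrix and `ω` a real number.  Then `μ_∞[X] ≤ ω` if and
only if `‖e^{tX}‖_∞ ≤ e^{tω}` for all `t ≥ 0`. -/
theorem statement0 {n : ℕ} (hn : 0 < n) (X : Matrix (Fin n) (Fin n) ℝ) (ω : ℝ) :
    logMaxNorm X ≤ ω ↔
      ∀ t : ℝ, 0 ≤ t → matMaxNorm (NormedSpace.exp (t • X)) ≤ Real.exp (t * ω) := by
  exact statement0_aux hn X ω
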